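/- Let d ≥ 1 and let k̂ : ℝ^d → ℝ be measurable with 0 ≤ k̂(λ) ≤ 1 for all λ. For complex-valued Schwartz functions u define K₁u := F⁻¹(k̂^{1/2} · û) and K₂u := F⁻¹((1 − k̂)^{1/2} · û), and let J denote pointwise complex conjugation. Then for every real-valued Schwartz function f and all complex-valued Schwartz functions g, h on ℝ^d: ∫_{ℝ^d} conj( f(x) · (K₁(Jh))(x) ) · (K₂ g)(x) dx = (2π)^{−d/2} ∫_{ℝ^d} ∫_{ℝ^d} conj( f̂(λ + ξ) ) · (1 − k̂(λ))^{1/2} · k̂(−ξ)^{1/2} · ĝ(λ) · ĥ(ξ) dλ dξ. -/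

import Mathlib

open MeasureTheory

/-- The Fourier transform `û(ξ) = (2π)^{-d/2} ∫ e^{-i x·ξ} u(x) dx`. -/
noncomputable def fourierT (d : ℕ) (u : EuclideanSpace ℝ (Fin d) → ℂ)
    (ξ : EuclideanSpace ℝ (Fin d)) : ℂ :=
  ((2 * Real.pi : ℝ) ^ (-(d : ℝ) / 2) : ℝ) *
    ∫ x : EuclideanSpace ℝ (Fin d),
      Complex.exp (-(Complex.I * ((inner ℝ x ξ : ℝ) : ℂ))) * u x

/-- The inverse Fourier transform `ǔ(x) = (2π)^{-d/2} ∫ e^{i λ·x} u(λ) dλ`. -/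
noncomputable def invFourierT (d : ℕ) (u : EuclideanSpace ℝ (Fin d) → ℂ)
    (x : EuclideanSpace ℝ (Fin d)) : ℂ :=
  ((2 * Real.pi : ℝ) ^ (-(d : ℝ) / 2) : ℝ) *
    ∫ lam : EuclideanSpace ℝ (Fin d),
      Complex.exp (Complex.I * ((inner ℝ lam x : ℝ) : ℂ)) * u lam

/-- `K₁ u = F⁻¹(k̂^{1/2} · û)`. -/
noncomputable def Kone (d : ℕ) (khat : EuclideanSpace ℝ (Fin d) → ℝ)
    (u : EuclideanSpace ℝ (Fin d) → ℂ) : EuclideanSpace ℝ (Fin d) → ℂ :=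
  invFourierT d (fun lam => (Real.sqrt (khat lam) : ℂ) * fourierT d u lam)

/-- `K₂ u = F⁻¹((1 - k̂)^{1/2} · û)`. -/
noncomputable def Ktwo (d : ℕ) (khat : EuclideanSpace ℝ (Fin d) → ℝ)
    (u : EuclideanSpace ℝ (Fin d) → ℂ) : EuclideanSpace ℝ (Fin d) → ℂ :=
  invFourierT d (fun lam => (Real.sqrt (1 - khat lam) : ℂ) * fourierT d u lam)

namespace Stmt1Aux

open Complex FourierTransform Real SchwartzMap

noncomputable abbrev Cd (d : ℕ) : ℝ := (2 * Real.pi : ℝ) ^ (-(d : ℝ) / 2)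

lemma Cd_pos (d : ℕ) : 0 < Cd d := by unfold Cd; positivity

lemma two_pi_ne : (2 * Real.pi : ℝ) ≠ 0 := by positivity

lemma norm_exp_I_mul (t : ℝ) : ‖Complex.exp (Complex.I * (t : ℂ))‖ = 1 := by
  simp [Complex.norm_exp]

lemma norm_exp_neg_I_mul (t : ℝ) : ‖Complex.exp (-(Complex.I * (t : ℂ)))‖ = 1 := by
  simp [Complex.norm_exp]

/-- Bridge to mathlib's Fourier integral. -/
lemma fourierT_eq (d : ℕ) (u : EuclideanSpace ℝ (Fin d) → ℂ) (ξ : EuclideanSpace ℝ (Fin d)) :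
    fourierT d u ξ = (Cd d : ℂ) * 𝓕 u ((2 * Real.pi)⁻¹ • ξ) := by
  rw [Real.fourier_eq']
  unfold fourierT
  congr 1
  refine integral_congr_ae (Filter.Eventually.of_forall fun x => ?_)
  beta_reduce
  rw [smul_eq_mul]
  congr 1
  rw [real_inner_smul_right]
  have h1 : -2 * Real.pi * ((2 * Real.pi)⁻¹ * (inner ℝ x ξ : ℝ)) = -(inner ℝ x ξ : ℝ) := by
    field_simp
  rw [h1]
  push_cast
  ring

lemma fourierT_integrable (d : ℕ) (u : SchwartzMap (EuclideanSpace ℝ (Fin d)) ℂ) :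
    Integrable (fourierT d ⇑u) := by
  have hS : Integrable (𝓕 ⇑u) := by
    simpa [SchwartzMap.fourier_coe] using (SchwartzMap.fourierTransformCLM ℂ u).integrable
  have h2 : Integrable (fun ξ : EuclideanSpace ℝ (Fin d) => (𝓕 ⇑u) ((2 * Real.pi)⁻¹ • ξ)) :=
    hS.comp_smul (inv_ne_zero two_pi_ne)
  have h3 := h2.const_mul ((Cd d : ℂ))
  refine h3.congr ?_
  filter_upwards with ξ
  rw [fourierT_eq]

lemma fourierT_continuous (d : ℕ) (u : EuclideanSpace ℝ (Fin d) → ℂ) (hu : Integrable u) :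
    Continuous (fourierT d u) := by
  have hS : Continuous (𝓕 u) :=
    VectorFourier.fourierIntegral_continuous Real.continuous_fourierChar
      (by exact continuous_inner) hu
  have h2 : Continuous fun ξ : EuclideanSpace ℝ (Fin d) =>
      (Cd d : ℂ) * (𝓕 u) ((2 * Real.pi)⁻¹ • ξ) :=
    continuous_const.mul (hS.comp (continuous_const_smul _))
  refine h2.congr fun ξ => ?_
  rw [fourierT_eq]

lemma fourierT_norm_le (d : ℕ) (u : EuclideanSpace ℝ (Fin d) → ℂ)
    (ξ : EuclideanSpace ℝ (Fin d)) :
    ‖fourierT d u ξ‖ ≤ Cd d * ∫ x : EuclideanSpace ℝ (Fin d), ‖u x‖ := by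
  unfold fourierT
  rw [norm_mul, Complex.norm_real, Real.norm_of_nonneg (Cd_pos d).le]
  refine mul_le_mul_of_nonneg_left ?_ (Cd_pos d).le
  refine (norm_integral_le_integral_norm _).trans_eq ?_
  refine integral_congr_ae (Filter.Eventually.of_forall fun x => ?_)
  beta_reduce
  rw [norm_mul, norm_exp_neg_I_mul, one_mul]

lemma fourierT_conj (d : ℕ) (h : EuclideanSpace ℝ (Fin d) → ℂ) (lam : EuclideanSpace ℝ (Fin d)) :
    fourierT d (fun y => (starRingEnd ℂ) (h y)) lam
      = (starRingEnd ℂ) (fourierT d h (-lam)) := by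
  unfold fourierT
  rw [map_mul, Complex.conj_ofReal, ← integral_conj]
  congr 1
  refine integral_congr_ae (Filter.Eventually.of_forall fun x => ?_)
  beta_reduce
  rw [map_mul, ← Complex.exp_conj]
  congr 2
  simp [inner_neg_right]

lemma conj_fourierT_real (d : ℕ) (f : SchwartzMap (EuclideanSpace ℝ (Fin d)) ℝ)
    (μ : EuclideanSpace ℝ (Fin d)) :
    (starRingEnd ℂ) (fourierT d (fun y => ((f y : ℝ) : ℂ)) μ)
      = (Cd d : ℂ) * ∫ x : EuclideanSpace ℝ (Fin d),
          Complex.exp (Complex.I * ((inner ℝ x μ : ℝ) : ℂ)) * ((f x : ℝ) : ℂ) := by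
  unfold fourierT
  rw [map_mul, Complex.conj_ofReal, ← integral_conj]
  congr 1
  refine integral_congr_ae (Filter.Eventually.of_forall fun x => ?_)
  beta_reduce
  rw [map_mul, Complex.conj_ofReal, ← Complex.exp_conj]
  congr 2
  simp

lemma integral_exp_real (d : ℕ) (f : SchwartzMap (EuclideanSpace ℝ (Fin d)) ℝ)
    (μ : EuclideanSpace ℝ (Fin d)) :
    ∫ x : EuclideanSpace ℝ (Fin d),
        ((f x : ℝ) : ℂ) * Complex.exp (Complex.I * ((inner ℝ μ x : ℝ) : ℂ))
      = ((Cd d : ℝ) : ℂ)⁻¹ *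
        (starRingEnd ℂ) (fourierT d (fun y => ((f y : ℝ) : ℂ)) μ) := by
  rw [conj_fourierT_real, ← mul_assoc, inv_mul_cancel₀ (by exact_mod_cast (Cd_pos d).ne'), one_mul]
  refine integral_congr_ae (Filter.Eventually.of_forall fun x => ?_)
  beta_reduce
  rw [real_inner_comm, mul_comm]

lemma conj_Kone (d : ℕ) (khat : EuclideanSpace ℝ (Fin d) → ℝ)
    (h : SchwartzMap (EuclideanSpace ℝ (Fin d)) ℂ) (x : EuclideanSpace ℝ (Fin d)) :
    (starRingEnd ℂ) (Kone d khat (fun y => (starRingEnd ℂ) (h y)) x)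
      = (Cd d : ℂ) * ∫ ξ : EuclideanSpace ℝ (Fin d),
          Complex.exp (Complex.I * ((inner ℝ ξ x : ℝ) : ℂ)) *
          ((Real.sqrt (khat (-ξ)) : ℂ) * fourierT d (⇑h) ξ) := by
  unfold Kone invFourierT
  rw [map_mul, Complex.conj_ofReal, ← integral_conj]
  congr 1
  have hneg := MeasureTheory.integral_neg_eq_self
    (fun ξ : EuclideanSpace ℝ (Fin d) => Complex.exp (Complex.I * ((inner ℝ ξ x : ℝ) : ℂ)) *
      ((Real.sqrt (khat (-ξ)) : ℂ) * fourierT d (⇑h) ξ)) (volume : Measure (EuclideanSpace ℝ (Fin d)))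
  rw [← hneg]
  refine integral_congr_ae (Filter.Eventually.of_forall fun lam => ?_)
  beta_reduce
  rw [map_mul, map_mul, Complex.conj_ofReal, fourierT_conj, Complex.conj_conj]
  rw [neg_neg, ← Complex.exp_conj]
  congr 2
  simp [inner_neg_left]

lemma key (d : ℕ) (f : SchwartzMap (EuclideanSpace ℝ (Fin d)) ℝ)
    (A B : EuclideanSpace ℝ (Fin d) → ℂ)
    (hA : Integrable A) (hB : Integrable B) (hAm : Measurable A) (hBm : Measurable B) :
    ∫ x : EuclideanSpace ℝ (Fin d),
        ((f x : ℝ) : ℂ) *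
          ((Cd d : ℂ) * ∫ ξ : EuclideanSpace ℝ (Fin d),
            Complex.exp (Complex.I * ((inner ℝ ξ x : ℝ) : ℂ)) * A ξ) *
          ((Cd d : ℂ) * ∫ lam : EuclideanSpace ℝ (Fin d),
            Complex.exp (Complex.I * ((inner ℝ lam x : ℝ) : ℂ)) * B lam)
      = (Cd d : ℂ) * ∫ lam : EuclideanSpace ℝ (Fin d), ∫ ξ : EuclideanSpace ℝ (Fin d),
          B lam * A ξ *
          (starRingEnd ℂ) (fourierT d (fun y => ((f y : ℝ) : ℂ)) (lam + ξ)) := by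
  have hc : ((Cd d : ℝ) : ℂ) ≠ 0 := by exact_mod_cast (Cd_pos d).ne'
  set ν : Measure (EuclideanSpace ℝ (Fin d)) := volume with hν
  have hfc : Integrable (fun x : EuclideanSpace ℝ (Fin d) => ((f x : ℝ) : ℂ)) :=
    f.integrable.ofReal
  -- measurability of the big integrand
  have hE1 : Measurable fun q : (EuclideanSpace ℝ (Fin d)) ×
      ((EuclideanSpace ℝ (Fin d)) × (EuclideanSpace ℝ (Fin d))) =>
      Complex.exp (Complex.I * ((inner ℝ q.2.1 q.1 : ℝ) : ℂ)) := by
    have hc1 : Continuous fun q : (EuclideanSpace ℝ (Fin d)) ×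
        ((EuclideanSpace ℝ (Fin d)) × (EuclideanSpace ℝ (Fin d))) => (inner ℝ q.2.1 q.1 : ℝ) :=
      continuous_inner.comp ((continuous_fst.comp continuous_snd).prodMk continuous_fst)
    exact Complex.measurable_exp.comp
      ((Complex.measurable_ofReal.comp hc1.measurable).const_mul _)
  have hE2 : Measurable fun q : (EuclideanSpace ℝ (Fin d)) ×
      ((EuclideanSpace ℝ (Fin d)) × (EuclideanSpace ℝ (Fin d))) =>
      Complex.exp (Complex.I * ((inner ℝ q.2.2 q.1 : ℝ) : ℂ)) := by
    have hc2 : Continuous fun q : (EuclideanSpace ℝ (Fin d)) ×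
        ((EuclideanSpace ℝ (Fin d)) × (EuclideanSpace ℝ (Fin d))) => (inner ℝ q.2.2 q.1 : ℝ) :=
      continuous_inner.comp ((continuous_snd.comp continuous_snd).prodMk continuous_fst)
    exact Complex.measurable_exp.comp
      ((Complex.measurable_ofReal.comp hc2.measurable).const_mul _)
  have hfm : Measurable fun q : (EuclideanSpace ℝ (Fin d)) ×
      ((EuclideanSpace ℝ (Fin d)) × (EuclideanSpace ℝ (Fin d))) => ((f q.1 : ℝ) : ℂ) :=
    Complex.measurable_ofReal.comp (f.continuous.measurable.comp measurable_fst)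
  have hint : Integrable (Function.uncurry fun (x : EuclideanSpace ℝ (Fin d))
      (p : (EuclideanSpace ℝ (Fin d)) × (EuclideanSpace ℝ (Fin d))) =>
      (Cd d : ℂ) ^ 2 * ((f x : ℝ) : ℂ) *
        ((Complex.exp (Complex.I * ((inner ℝ p.1 x : ℝ) : ℂ)) * B p.1) *
         (Complex.exp (Complex.I * ((inner ℝ p.2 x : ℝ) : ℂ)) * A p.2)))
      (ν.prod (ν.prod ν)) := by
    have hbound : Integrable (fun q : (EuclideanSpace ℝ (Fin d)) ×
        ((EuclideanSpace ℝ (Fin d)) × (EuclideanSpace ℝ (Fin d))) =>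
        ((Cd d) ^ 2 * ‖f q.1‖) * (‖B q.2.1‖ * ‖A q.2.2‖)) (ν.prod (ν.prod ν)) :=
      (f.integrable.norm.const_mul _).mul_prod (hB.norm.mul_prod hA.norm)
    refine hbound.mono' ?_ ?_
    · refine Measurable.aestronglyMeasurable ?_
      exact ((measurable_const.mul hfm).mul
        ((hE1.mul (hBm.comp (measurable_fst.comp measurable_snd))).mul
         (hE2.mul (hAm.comp (measurable_snd.comp measurable_snd)))))
    · refine Filter.Eventually.of_forall fun q => le_of_eq ?_
      simp only [Function.uncurry]
      rw [norm_mul, norm_mul, norm_mul, norm_mul, norm_mul, norm_exp_I_mul, norm_exp_I_mul,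
        norm_pow, Complex.norm_real, Complex.norm_real,
        Real.norm_of_nonneg (Cd_pos d).le]
      ring
  -- the inner function is integrable on the product of the two λ, ξ variables
  have hfhat_cont : Continuous (fourierT d (fun y => ((f y : ℝ) : ℂ))) :=
    fourierT_continuous d _ hfc
  have hΨ : Integrable (fun p : (EuclideanSpace ℝ (Fin d)) × (EuclideanSpace ℝ (Fin d)) =>
      B p.1 * A p.2 *
        (starRingEnd ℂ) (fourierT d (fun y => ((f y : ℝ) : ℂ)) (p.1 + p.2))) (ν.prod ν) := by
    have hbound : Integrable (fun p : (EuclideanSpace ℝ (Fin d)) ×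
        (EuclideanSpace ℝ (Fin d)) =>
        (‖B p.1‖ * ‖A p.2‖) * (Cd d * ∫ x : EuclideanSpace ℝ (Fin d), ‖((f x : ℝ) : ℂ)‖))
        (ν.prod ν) :=
      (hB.norm.mul_prod hA.norm).mul_const _
    refine hbound.mono' ?_ ?_
    · refine Measurable.aestronglyMeasurable ?_
      exact ((hBm.comp measurable_fst).mul (hAm.comp measurable_snd)).mul
        (Complex.continuous_conj.measurable.comp (hfhat_cont.measurable.comp measurable_add))
    · refine Filter.Eventually.of_forall fun p => ?_
      rw [norm_mul, norm_mul, RCLike.norm_conj]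
      refine mul_le_mul_of_nonneg_left (fourierT_norm_le d _ _) (by positivity)
  calc
    ∫ x : EuclideanSpace ℝ (Fin d),
        ((f x : ℝ) : ℂ) *
          ((Cd d : ℂ) * ∫ ξ : EuclideanSpace ℝ (Fin d),
            Complex.exp (Complex.I * ((inner ℝ ξ x : ℝ) : ℂ)) * A ξ) *
          ((Cd d : ℂ) * ∫ lam : EuclideanSpace ℝ (Fin d),
            Complex.exp (Complex.I * ((inner ℝ lam x : ℝ) : ℂ)) * B lam)
      = ∫ x : EuclideanSpace ℝ (Fin d),
          ∫ p : (EuclideanSpace ℝ (Fin d)) × (EuclideanSpace ℝ (Fin d)),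
            (Cd d : ℂ) ^ 2 * ((f x : ℝ) : ℂ) *
              ((Complex.exp (Complex.I * ((inner ℝ p.1 x : ℝ) : ℂ)) * B p.1) *
               (Complex.exp (Complex.I * ((inner ℝ p.2 x : ℝ) : ℂ)) * A p.2)) ∂(ν.prod ν) := by
        refine integral_congr_ae (Filter.Eventually.of_forall fun x => ?_)
        beta_reduce
        have hpm := integral_prod_mul (μ := ν) (ν := ν)
          (f := fun lam : EuclideanSpace ℝ (Fin d) =>
            Complex.exp (Complex.I * ((inner ℝ lam x : ℝ) : ℂ)) * B lam)
          (g := fun ξ : EuclideanSpace ℝ (Fin d) =>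
            Complex.exp (Complex.I * ((inner ℝ ξ x : ℝ) : ℂ)) * A ξ)
        calc
          ((f x : ℝ) : ℂ) *
              ((Cd d : ℂ) * ∫ ξ : EuclideanSpace ℝ (Fin d),
                Complex.exp (Complex.I * ((inner ℝ ξ x : ℝ) : ℂ)) * A ξ) *
              ((Cd d : ℂ) * ∫ lam : EuclideanSpace ℝ (Fin d),
                Complex.exp (Complex.I * ((inner ℝ lam x : ℝ) : ℂ)) * B lam)
            = ((Cd d : ℂ) ^ 2 * ((f x : ℝ) : ℂ)) *
              ((∫ lam : EuclideanSpace ℝ (Fin d),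
                Complex.exp (Complex.I * ((inner ℝ lam x : ℝ) : ℂ)) * B lam) *
               (∫ ξ : EuclideanSpace ℝ (Fin d),
                Complex.exp (Complex.I * ((inner ℝ ξ x : ℝ) : ℂ)) * A ξ)) := by ring
          _ = ((Cd d : ℂ) ^ 2 * ((f x : ℝ) : ℂ)) *
              ∫ p : (EuclideanSpace ℝ (Fin d)) × (EuclideanSpace ℝ (Fin d)),
                (Complex.exp (Complex.I * ((inner ℝ p.1 x : ℝ) : ℂ)) * B p.1) *
                (Complex.exp (Complex.I * ((inner ℝ p.2 x : ℝ) : ℂ)) * A p.2) ∂(ν.prod ν) := by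
              rw [hpm]
          _ = _ := by
              rw [← integral_const_mul]
    _ = ∫ p : (EuclideanSpace ℝ (Fin d)) × (EuclideanSpace ℝ (Fin d)),
          (∫ x : EuclideanSpace ℝ (Fin d),
            (Cd d : ℂ) ^ 2 * ((f x : ℝ) : ℂ) *
              ((Complex.exp (Complex.I * ((inner ℝ p.1 x : ℝ) : ℂ)) * B p.1) *
               (Complex.exp (Complex.I * ((inner ℝ p.2 x : ℝ) : ℂ)) * A p.2))) ∂(ν.prod ν) :=
        integral_integral_swap hint
    _ = ∫ p : (EuclideanSpace ℝ (Fin d)) × (EuclideanSpace ℝ (Fin d)),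
          (Cd d : ℂ) * (B p.1 * A p.2 *
            (starRingEnd ℂ) (fourierT d (fun y => ((f y : ℝ) : ℂ)) (p.1 + p.2))) ∂(ν.prod ν) := by
        refine integral_congr_ae (Filter.Eventually.of_forall fun p => ?_)
        beta_reduce
        calc
          ∫ x : EuclideanSpace ℝ (Fin d),
              (Cd d : ℂ) ^ 2 * ((f x : ℝ) : ℂ) *
                ((Complex.exp (Complex.I * ((inner ℝ p.1 x : ℝ) : ℂ)) * B p.1) *
                 (Complex.exp (Complex.I * ((inner ℝ p.2 x : ℝ) : ℂ)) * A p.2))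
            = ∫ x : EuclideanSpace ℝ (Fin d),
                (B p.1 * A p.2 * (Cd d : ℂ) ^ 2) *
                  (((f x : ℝ) : ℂ) *
                    Complex.exp (Complex.I * ((inner ℝ (p.1 + p.2) x : ℝ) : ℂ))) := by
              refine integral_congr_ae (Filter.Eventually.of_forall fun x => ?_)
              beta_reduce
              rw [inner_add_left]
              push_cast
              rw [mul_add, Complex.exp_add]
              ring
          _ = (B p.1 * A p.2 * (Cd d : ℂ) ^ 2) *
              ∫ x : EuclideanSpace ℝ (Fin d),
                ((f x : ℝ) : ℂ) *
                  Complex.exp (Complex.I * ((inner ℝ (p.1 + p.2) x : ℝ) : ℂ)) :=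
            integral_const_mul _ _
          _ = (B p.1 * A p.2 * (Cd d : ℂ) ^ 2) *
              (((Cd d : ℝ) : ℂ)⁻¹ *
                (starRingEnd ℂ) (fourierT d (fun y => ((f y : ℝ) : ℂ)) (p.1 + p.2))) := by
            rw [integral_exp_real]
          _ = (Cd d : ℂ) * (B p.1 * A p.2 *
              (starRingEnd ℂ) (fourierT d (fun y => ((f y : ℝ) : ℂ)) (p.1 + p.2))) := by
            field_simp
    _ = (Cd d : ℂ) * ∫ p : (EuclideanSpace ℝ (Fin d)) × (EuclideanSpace ℝ (Fin d)),
          B p.1 * A p.2 *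
            (starRingEnd ℂ) (fourierT d (fun y => ((f y : ℝ) : ℂ)) (p.1 + p.2)) ∂(ν.prod ν) :=
        integral_const_mul _ _
    _ = (Cd d : ℂ) * ∫ lam : EuclideanSpace ℝ (Fin d), ∫ ξ : EuclideanSpace ℝ (Fin d),
          B lam * A ξ *
            (starRingEnd ℂ) (fourierT d (fun y => ((f y : ℝ) : ℂ)) (lam + ξ)) := by
        rw [integral_prod _ hΨ]

end Stmt1Aux


open Stmt1Aux in
/-- the Parseval-type identity (weqew3) from the proof of Lemma 3.1:
`∫ conj(f(x) (K₁ Jh)(x)) (K₂ g)(x) dx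
   = (2π)^{-d/2} ∫∫ conj(f̂(λ+ξ)) (1-k̂(λ))^{1/2} k̂(-ξ)^{1/2} ĝ(λ) ĥ(ξ) dλ dξ`. -/
theorem stmt1 (d : ℕ) (hd : 1 ≤ d)
    (khat : EuclideanSpace ℝ (Fin d) → ℝ) (hkm : Measurable khat)
    (hk01 : ∀ lam, 0 ≤ khat lam ∧ khat lam ≤ 1)
    (f : SchwartzMap (EuclideanSpace ℝ (Fin d)) ℝ)
    (g h : SchwartzMap (EuclideanSpace ℝ (Fin d)) ℂ) :
    ∫ x : EuclideanSpace ℝ (Fin d),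
        (starRingEnd ℂ) (((f x : ℝ) : ℂ) *
            Kone d khat (fun y => (starRingEnd ℂ) (h y)) x) * Ktwo d khat (fun y => g y) x
      = ((2 * Real.pi : ℝ) ^ (-(d : ℝ) / 2) : ℝ) *
          ∫ lam : EuclideanSpace ℝ (Fin d), ∫ ξ : EuclideanSpace ℝ (Fin d),
            (starRingEnd ℂ) (fourierT d (fun y => ((f y : ℝ) : ℂ)) (lam + ξ)) *
              (Real.sqrt (1 - khat lam) : ℂ) * (Real.sqrt (khat (-ξ)) : ℂ) *
              fourierT d (fun y => g y) lam * fourierT d (fun y => h y) ξ := by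
  have hAm : Measurable fun ξ : EuclideanSpace ℝ (Fin d) =>
      (Real.sqrt (khat (-ξ)) : ℂ) * fourierT d (⇑h) ξ :=
    (Complex.measurable_ofReal.comp (Real.continuous_sqrt.measurable.comp
      (hkm.comp measurable_neg))).mul (fourierT_continuous d ⇑h h.integrable).measurable
  have hBm : Measurable fun lam : EuclideanSpace ℝ (Fin d) =>
      (Real.sqrt (1 - khat lam) : ℂ) * fourierT d (⇑g) lam :=
    (Complex.measurable_ofReal.comp (Real.continuous_sqrt.measurable.comp
      (measurable_const.sub hkm))).mul (fourierT_continuous d ⇑g g.integrable).measurable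
  have hA : Integrable (fun ξ : EuclideanSpace ℝ (Fin d) =>
      (Real.sqrt (khat (-ξ)) : ℂ) * fourierT d (⇑h) ξ) := by
    refine (fourierT_integrable d h).mono hAm.aestronglyMeasurable ?_
    refine Filter.Eventually.of_forall fun ξ => ?_
    rw [norm_mul, Complex.norm_real, Real.norm_of_nonneg (Real.sqrt_nonneg _)]
    exact mul_le_of_le_one_left (norm_nonneg _) (Real.sqrt_le_one.mpr (hk01 _).2)
  have hB : Integrable (fun lam : EuclideanSpace ℝ (Fin d) =>
      (Real.sqrt (1 - khat lam) : ℂ) * fourierT d (⇑g) lam) := by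
    refine (fourierT_integrable d g).mono hBm.aestronglyMeasurable ?_
    refine Filter.Eventually.of_forall fun lam => ?_
    rw [norm_mul, Complex.norm_real, Real.norm_of_nonneg (Real.sqrt_nonneg _)]
    exact mul_le_of_le_one_left (norm_nonneg _)
      (Real.sqrt_le_one.mpr (sub_le_self 1 (hk01 lam).1))
  calc
    ∫ x : EuclideanSpace ℝ (Fin d),
        (starRingEnd ℂ) (((f x : ℝ) : ℂ) *
            Kone d khat (fun y => (starRingEnd ℂ) (h y)) x) * Ktwo d khat (fun y => g y) x
      = ∫ x : EuclideanSpace ℝ (Fin d),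
          ((f x : ℝ) : ℂ) *
            ((Cd d : ℂ) * ∫ ξ : EuclideanSpace ℝ (Fin d),
              Complex.exp (Complex.I * ((inner ℝ ξ x : ℝ) : ℂ)) *
                ((Real.sqrt (khat (-ξ)) : ℂ) * fourierT d (⇑h) ξ)) *
            ((Cd d : ℂ) * ∫ lam : EuclideanSpace ℝ (Fin d),
              Complex.exp (Complex.I * ((inner ℝ lam x : ℝ) : ℂ)) *
                ((Real.sqrt (1 - khat lam) : ℂ) * fourierT d (⇑g) lam)) := by
        refine integral_congr_ae (Filter.Eventually.of_forall fun x => ?_)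
        beta_reduce
        rw [map_mul, Complex.conj_ofReal, conj_Kone]
        rfl
    _ = (Cd d : ℂ) * ∫ lam : EuclideanSpace ℝ (Fin d), ∫ ξ : EuclideanSpace ℝ (Fin d),
          ((Real.sqrt (1 - khat lam) : ℂ) * fourierT d (⇑g) lam) *
            ((Real.sqrt (khat (-ξ)) : ℂ) * fourierT d (⇑h) ξ) *
            (starRingEnd ℂ) (fourierT d (fun y => ((f y : ℝ) : ℂ)) (lam + ξ)) :=
      key d f _ _ hA hB hAm hBm
    _ = ((2 * Real.pi : ℝ) ^ (-(d : ℝ) / 2) : ℝ) *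
          ∫ lam : EuclideanSpace ℝ (Fin d), ∫ ξ : EuclideanSpace ℝ (Fin d),
            (starRingEnd ℂ) (fourierT d (fun y => ((f y : ℝ) : ℂ)) (lam + ξ)) *
              (Real.sqrt (1 - khat lam) : ℂ) * (Real.sqrt (khat (-ξ)) : ℂ) *
              fourierT d (fun y => g y) lam * fourierT d (fun y => h y) ξ := by
        congr 1
        refine integral_congr_ae (Filter.Eventually.of_forall fun lam => ?_)
        beta_reduce
        refine integral_congr_ae (Filter.Eventually.of_forall fun ξ => ?_)
        beta_reduce
        ring
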